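/- For the RLC circuit with twice-differentiable signals, define the stored energy E = (1/2) L i² + (1/2) C v², its derivative p = E', the tangent-space energy E_t = (1/2) L (i')² + (1/2) C (v')², the capacitor reactive power rate Q̇_C = C v v'' - C (v')², the control reactive power rate Q̇^u = u i' - i u', and the port reactive power rate Q̇^r = v · (d/dt)(-P/v) - (-P/v) · v'. Then the second-order energy-space identity p'(t) = 4 E_t(t) + 2 Q̇_C(t) - Q̇^u(t) - Q̇^r(t) holds for all t. -/
import Mathlib


/-- For the series RLC circuit with twice-differentiable signals,
the second-order energy-space identity `p' = 4 E_t + 2 Q̇_C - Q̇ᵘ - Q̇ʳ` holds,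
where `E = (1/2) L i² + (1/2) C v²`, `p = E'`,
`E_t = (1/2) L (i')² + (1/2) C (v')²`, `Q̇_C = C v v'' - C (v')²`,
`Q̇ᵘ = u i' - i u'`, and `Q̇ʳ = v (-P/v)' - (-P/v) v'`. -/
theorem rlc_second_order_energy_identity
    (R L C : ℝ) (hR : 0 < R) (hL : 0 < L) (hC : 0 < C)
    (i v u P : ℝ → ℝ)
    (hi : Differentiable ℝ i) (hi' : Differentiable ℝ (deriv i))
    (hv : Differentiable ℝ v) (hv' : Differentiable ℝ (deriv v))
    (hu : Differentiable ℝ u) (hu' : Differentiable ℝ (deriv u))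
    (hP : Differentiable ℝ P) (hP' : Differentiable ℝ (deriv P))
    (hvne : ∀ t : ℝ, v t ≠ 0)
    (hdyn₁ : ∀ t : ℝ, L * deriv i t = -R * i t - v t + u t)
    (hdyn₂ : ∀ t : ℝ, C * deriv v t = i t - P t / v t)
    (E p Et QdC Qdu Qdr : ℝ → ℝ)
    (hE : ∀ t : ℝ, E t = (1/2) * L * (i t)^2 + (1/2) * C * (v t)^2)
    (hp : ∀ t : ℝ, p t = deriv E t)
    (hEt : ∀ t : ℝ, Et t = (1/2) * L * (deriv i t)^2 + (1/2) * C * (deriv v t)^2)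
    (hQdC : ∀ t : ℝ, QdC t = C * v t * deriv (deriv v) t - C * (deriv v t)^2)
    (hQdu : ∀ t : ℝ, Qdu t = u t * deriv i t - i t * deriv u t)
    (hQdr : ∀ t : ℝ,
      Qdr t = v t * deriv (fun s => -P s / v s) t - (-P t / v t) * deriv v t) :
    ∀ t : ℝ, deriv p t = 4 * Et t + 2 * QdC t - Qdu t - Qdr t := by
  intro t
  -- derivative of E
  have hDE : deriv E = fun s => L * (i s * deriv i s) + C * (v s * deriv v s) := by
    funext s
    have hEfun : E = fun r => (1/2) * L * (i r)^2 + (1/2) * C * (v r)^2 := funext hE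
    have h1 : HasDerivAt (fun r => (1/2) * L * (i r)^2 + (1/2) * C * (v r)^2)
        ((1/2) * L * (2 * i s ^ 1 * deriv i s) + (1/2) * C * (2 * v s ^ 1 * deriv v s)) s := by
      exact ((((hi s).hasDerivAt.pow 2).const_mul _).add (((hv s).hasDerivAt.pow 2).const_mul _))
    rw [hEfun, h1.deriv]; ring
  have hpfun : p = fun s => L * (i s * deriv i s) + C * (v s * deriv v s) := by
    funext s; rw [hp s, hDE]
  -- deriv of p
  have hpp : HasDerivAt p
      (L * (deriv i t * deriv i t + i t * deriv (deriv i) t)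
        + C * (deriv v t * deriv v t + v t * deriv (deriv v) t)) t := by
    rw [hpfun]
    exact (((hi t).hasDerivAt.mul (hi' t).hasDerivAt).const_mul L).add
      (((hv t).hasDerivAt.mul (hv' t).hasDerivAt).const_mul C)
  -- differentiated first dynamic equation
  have hd1 : L * deriv (deriv i) t = -R * deriv i t - deriv v t + deriv u t := by
    have hfun : (fun s => L * deriv i s) = fun s => -R * i s - v s + u s := funext hdyn₁
    have hLd : HasDerivAt (fun s => L * deriv i s) (L * deriv (deriv i) t) t :=
      (hi' t).hasDerivAt.const_mul L
    have hRd : HasDerivAt (fun s => -R * i s - v s + u s)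
        (-R * deriv i t - deriv v t + deriv u t) t :=
      (((hi t).hasDerivAt.const_mul (-R)).sub (hv t).hasDerivAt).add (hu t).hasDerivAt
    rw [hfun] at hLd
    exact hLd.unique hRd
  -- rewrite -P/v
  have hratio : (fun s => -P s / v s) = fun s => C * deriv v s - i s := by
    funext s
    have h2 := hdyn₂ s
    rw [neg_div]; linarith
  have hdr : deriv (fun s => -P s / v s) t = C * deriv (deriv v) t - deriv i t := by
    rw [hratio]
    exact (((hv' t).hasDerivAt.const_mul C).sub (hi t).hasDerivAt).deriv
  have hPv : -P t / v t = C * deriv v t - i t := by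
    have h2 := hdyn₂ t; rw [neg_div]; linarith
  rw [hpp.deriv, hEt t, hQdC t, hQdu t, hQdr t, hdr, hPv]
  linear_combination (- deriv i t) * hdyn₁ t + i t * hd1
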